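/- The reflexive digraph H_4, with vertices {x1,x2,x3,x4}, all loops, symmetric arcs between x1,x3 and between x3,x4 and between x1,x4, single arcs x2x1 and x3x2 (but not their reverses), and no arcs between x2 and x4, does not admit a Min-Max ordering. -/

import Mathlib

/-- `lt` is a Min-Max ordering of the digraph with arc relation `A`. -/
def IsMinMaxOrdering {V : Type*} (A : V → V → Prop) (lt : V → V → Prop) : Prop :=
  IsStrictTotalOrder V lt ∧
    ∀ i j s r : V, lt i j → lt s r → A i r → A j s → A i s ∧ A j r

/-- The digraph with arc relation `A` admits a Min-Max ordering. -/
def HasMinMaxOrdering {V : Type*} (A : V → V → Prop) : Prop :=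
  ∃ lt : V → V → Prop, IsMinMaxOrdering A lt

/-- The reflexive digraph $H_4$ on $x_1,x_2,x_3,x_4$ (identified with 0,1,2,3):
all loops, symmetric arcs $x_1x_3, x_3x_4, x_1x_4$, single arcs $x_2x_1$ and $x_3x_2$,
and no arcs between $x_2$ and $x_4$. -/
def H4 : Fin 4 → Fin 4 → Prop := fun a b =>
  a = b ∨ (a, b) ∈
    ({(0,2),(2,0),(2,3),(3,2),(0,3),(3,0),(1,0),(2,1)} : Set (Fin 4 × Fin 4))

theorem stmt11 : ¬ HasMinMaxOrdering H4 := by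
  rintro ⟨lt, hsto, hmm⟩
  have htr : ∀ a b c : Fin 4, lt a b → lt b c → lt a c := fun a b c => hsto.trans a b c
  have hirr : ∀ a : Fin 4, ¬ lt a a := hsto.irrefl
  have tot : ∀ a b : Fin 4, a ≠ b → lt a b ∨ lt b a := by
    intro a b hne
    rcases (or_iff_not_imp_left.2 fun h1 => or_iff_not_imp_right.2 fun h2 => hsto.trichotomous a b h1 h2 : lt a b ∨ a = b ∨ lt b a) with h|h|h
    exacts [Or.inl h, absurd h hne, Or.inr h]
  have p00 : H4 (0:Fin 4) 0 := by simp [H4]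
  have p02 : H4 (0:Fin 4) 2 := by simp [H4]
  have p03 : H4 (0:Fin 4) 3 := by simp [H4]
  have p10 : H4 (1:Fin 4) 0 := by simp [H4]
  have p21 : H4 (2:Fin 4) 1 := by simp [H4]
  have n01 : ¬ H4 (0:Fin 4) 1 := by simp [H4]
  have n12 : ¬ H4 (1:Fin 4) 2 := by simp [H4]
  have n13 : ¬ H4 (1:Fin 4) 3 := by simp [H4]
  rcases tot 0 1 (by decide) with h01|h01 <;>
  rcases tot 0 2 (by decide) with h02|h02 <;>
  rcases tot 0 3 (by decide) with h03|h03 <;>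
  rcases tot 1 2 (by decide) with h12|h12 <;>
  rcases tot 1 3 (by decide) with h13|h13 <;>
  rcases tot 2 3 (by decide) with h23|h23
  · exact absurd (hmm 0 1 0 2 h01 h02 p02 p10).2 n12
  · exact absurd (hmm 0 1 0 2 h01 h02 p02 p10).2 n12
  · exact hirr 1 (htr 1 2 1 h12 (htr 2 3 1 h23 h13))
  · exact absurd (hmm 0 1 0 2 h01 h02 p02 p10).2 n12
  · exact absurd (hmm 0 1 0 2 h01 h02 p02 p10).2 n12
  · exact hirr 1 (htr 1 3 1 h13 (htr 3 2 1 h23 h12))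
  · exact absurd (hmm 0 1 0 2 h01 h02 p02 p10).2 n12
  · exact absurd (hmm 0 1 0 2 h01 h02 p02 p10).2 n12
  · exact hirr 0 (htr 0 1 0 h01 (htr 1 3 0 h13 h03))
  · exact hirr 0 (htr 0 1 0 h01 (htr 1 3 0 h13 h03))
  · exact hirr 0 (htr 0 2 0 h02 (htr 2 3 0 h23 h03))
  · exact absurd (hmm 0 1 0 2 h01 h02 p02 p10).2 n12
  · exact hirr 0 (htr 0 1 0 h01 (htr 1 3 0 h13 h03))
  · exact hirr 0 (htr 0 1 0 h01 (htr 1 3 0 h13 h03))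
  · exact hirr 0 (htr 0 2 0 h02 (htr 2 3 0 h23 h03))
  · exact absurd (hmm 0 1 0 2 h01 h02 p02 p10).2 n12
  · exact hirr 0 (htr 0 1 0 h01 (htr 1 2 0 h12 h02))
  · exact hirr 0 (htr 0 1 0 h01 (htr 1 2 0 h12 h02))
  · exact hirr 0 (htr 0 1 0 h01 (htr 1 2 0 h12 h02))
  · exact hirr 0 (htr 0 1 0 h01 (htr 1 2 0 h12 h02))
  · exact absurd (hmm 0 1 0 3 h01 h03 p03 p10).2 n13
  · exact hirr 0 (htr 0 3 0 h03 (htr 3 2 0 h23 h02))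
  · exact absurd (hmm 0 1 0 3 h01 h03 p03 p10).2 n13
  · exact hirr 0 (htr 0 3 0 h03 (htr 3 2 0 h23 h02))
  · exact hirr 0 (htr 0 1 0 h01 (htr 1 2 0 h12 h02))
  · exact hirr 0 (htr 0 1 0 h01 (htr 1 2 0 h12 h02))
  · exact hirr 0 (htr 0 1 0 h01 (htr 1 2 0 h12 h02))
  · exact hirr 0 (htr 0 1 0 h01 (htr 1 2 0 h12 h02))
  · exact hirr 0 (htr 0 1 0 h01 (htr 1 3 0 h13 h03))
  · exact hirr 0 (htr 0 1 0 h01 (htr 1 3 0 h13 h03))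
  · exact absurd (hmm 2 0 0 1 h02 h01 p21 p00).2 n01
  · exact absurd (hmm 2 0 0 1 h02 h01 p21 p00).2 n01
  · exact absurd (hmm 0 2 1 0 h02 h01 p00 p21).1 n01
  · exact absurd (hmm 0 2 1 0 h02 h01 p00 p21).1 n01
  · exact hirr 0 (htr 0 3 0 h03 (htr 3 1 0 h13 h01))
  · exact hirr 0 (htr 0 3 0 h03 (htr 3 1 0 h13 h01))
  · exact hirr 0 (htr 0 2 0 h02 (htr 2 1 0 h12 h01))
  · exact hirr 0 (htr 0 2 0 h02 (htr 2 1 0 h12 h01))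
  · exact hirr 0 (htr 0 2 0 h02 (htr 2 1 0 h12 h01))
  · exact hirr 0 (htr 0 2 0 h02 (htr 2 1 0 h12 h01))
  · exact hirr 0 (htr 0 2 0 h02 (htr 2 3 0 h23 h03))
  · exact absurd (hmm 0 2 1 0 h02 h01 p00 p21).1 n01
  · exact hirr 0 (htr 0 2 0 h02 (htr 2 3 0 h23 h03))
  · exact absurd (hmm 0 2 1 0 h02 h01 p00 p21).1 n01
  · exact hirr 0 (htr 0 2 0 h02 (htr 2 1 0 h12 h01))
  · exact hirr 0 (htr 0 2 0 h02 (htr 2 1 0 h12 h01))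
  · exact hirr 0 (htr 0 2 0 h02 (htr 2 1 0 h12 h01))
  · exact hirr 0 (htr 0 2 0 h02 (htr 2 1 0 h12 h01))
  · exact absurd (hmm 1 0 2 0 h01 h02 p10 p02).1 n12
  · exact hirr 0 (htr 0 3 0 h03 (htr 3 2 0 h23 h02))
  · exact hirr 0 (htr 0 3 0 h03 (htr 3 1 0 h13 h01))
  · exact hirr 0 (htr 0 3 0 h03 (htr 3 1 0 h13 h01))
  · exact absurd (hmm 1 0 2 0 h01 h02 p10 p02).1 n12
  · exact hirr 0 (htr 0 3 0 h03 (htr 3 2 0 h23 h02))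
  · exact hirr 0 (htr 0 3 0 h03 (htr 3 1 0 h13 h01))
  · exact hirr 0 (htr 0 3 0 h03 (htr 3 1 0 h13 h01))
  · exact absurd (hmm 1 0 2 0 h01 h02 p10 p02).1 n12
  · exact absurd (hmm 1 0 2 0 h01 h02 p10 p02).1 n12
  · exact hirr 1 (htr 1 2 1 h12 (htr 2 3 1 h23 h13))
  · exact absurd (hmm 1 0 2 0 h01 h02 p10 p02).1 n12
  · exact absurd (hmm 1 0 2 0 h01 h02 p10 p02).1 n12
  · exact hirr 1 (htr 1 3 1 h13 (htr 3 2 1 h23 h12))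
  · exact absurd (hmm 1 0 2 0 h01 h02 p10 p02).1 n12
  · exact absurd (hmm 1 0 2 0 h01 h02 p10 p02).1 n12
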